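/- arXiv:2508.20204 — 3 statements merged into one kernel-verified Lean document; each statement's English description precedes it below -/
import Mathlib

section
/- Under the standing assumptions on G, let S ⊆ 𝒳 be a closed set and let 𝟙_S denote its indicator function. Define recursively λ_0^S(x) = 𝟙_S(x) and λ_{k+1}^S(x, v_0, …, v_k) = sup_{x_1 ∈ G(x, v_0)} λ_k^S(x_1, v_1, …, v_k). Then for each k ∈ ℕ and each x ∈ 𝒳, the function (v_0, …, v_k) ↦ λ_{k+1}^S(x, v_0, …, v_k) is measurable on 𝒱^{k+1}. -/
open MeasureTheory Set Pointwise

/-- A set-valued map `G` is upper semicontinuous on `X`. -/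
def USCOn {E F : Type*} [TopologicalSpace E] [NormedAddCommGroup F]
    (X : Set E) (G : E → Set F) : Prop :=
  ∀ x ∈ X, ∀ δ > 0, ∃ U ∈ nhds x, ∀ y ∈ U ∩ X, G y ⊆ G x + Metric.ball 0 δ

/-- A set-valued map `G` is locally bounded on `X`. -/
def LocallyBoundedOn {E F : Type*} [TopologicalSpace E] [Norm F]
    (X : Set E) (G : E → Set F) : Prop :=
  ∀ x ∈ X, ∃ U ∈ nhds x, ∃ β > 0, ∀ y ∈ U ∩ X, ∀ ζ ∈ G y, ‖ζ‖ ≤ β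

/-- Measurability of a set-valued map. -/
def MeasSetValued {T F : Type*} [MeasurableSpace T] [TopologicalSpace F]
    (S : T → Set F) : Prop :=
  ∀ O : Set F, IsOpen O → MeasurableSet {t | (S t ∩ O).Nonempty}

/-- Standing assumptions on the stochastic difference inclusion `x⁺ ∈ G x v`. -/
structure Standing {n m : ℕ} (X : Set (Fin n → ℝ)) (V : Set (Fin m → ℝ))
    (G : (Fin n → ℝ) → (Fin m → ℝ) → Set (Fin n → ℝ)) : Prop where
  usc : ∀ v ∈ V, USCOn X (fun x => G x v)
  locBdd : LocallyBoundedOn (X ×ˢ V) (fun p => G p.1 p.2)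
  nonemptyVals : ∀ x ∈ X, ∀ v ∈ V, (G x v).Nonempty
  closedVals : ∀ x ∈ X, ∀ v ∈ V, IsClosed (G x v)
  convexVals : ∀ x ∈ X, ∀ v ∈ V, Convex ℝ (G x v)
  graphMeas : MeasSetValued (fun v : Fin m → ℝ =>
    {p : (Fin n → ℝ) × (Fin n → ℝ) | p.1 ∈ X ∧ p.2 ∈ G p.1 v})

/-- The recursively defined functions `λ_k^B`:
`λ_0^B(x) = B(x)`, `λ_{k+1}^B(x, v₀,…,v_k) = sup_{x₁ ∈ G(x,v₀)} λ_k^B(x₁, v₁,…,v_k)`. -/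
noncomputable def lam {α β : Type*} (G : α → β → Set α) (B : α → ℝ) :
    (k : ℕ) → α → (Fin k → β) → ℝ
  | 0, x, _ => B x
  | (k+1), x, v => sSup ((fun y => lam G B k y (fun i => v i.succ)) '' G x (v 0))

section Aux

open Metric Filter Topology
open scoped Classical

/-- Reachable sets: `FReach G k x v` is the set of points reachable from `x`
in `k` steps using inputs `v 0, …, v (k-1)`. -/
def FReach {α β : Type*} (G : α → β → Set α) : (k : ℕ) → α → (Fin k → β) → Set α
  | 0, x, _ => {x}
  | (k+1), x, v => ⋃ y ∈ G x (v 0), FReach G k y (fun i => v i.succ)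

lemma freach_zero {α β : Type*} (G : α → β → Set α) (x : α) (v : Fin 0 → β) :
    FReach G 0 x v = {x} := rfl

lemma freach_succ {α β : Type*} (G : α → β → Set α) (k : ℕ) (x : α) (v : Fin (k+1) → β) :
    FReach G (k+1) x v = ⋃ y ∈ G x (v 0), FReach G k y (fun i => v i.succ) := rfl

/-- Back-peeling formula for reachable sets. -/
lemma freach_back {α β : Type*} (G : α → β → Set α) :
    ∀ (k : ℕ) (x : α) (v : Fin (k+1) → β),
    FReach G (k+1) x v
      = ⋃ y ∈ FReach G k x (fun i => v i.castSucc), G y (v (Fin.last k))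
  | 0, x, v => by
      ext z
      simp [FReach]
  | (k+1), x, v => by
      ext z
      constructor
      · intro hz
        rw [freach_succ] at hz
        obtain ⟨y, hy, hzy⟩ := mem_iUnion₂.1 hz
        rw [freach_back G k y (fun i => v i.succ)] at hzy
        obtain ⟨u, hu, hzu⟩ := mem_iUnion₂.1 hzy
        apply mem_iUnion₂.2
        refine ⟨u, ?_, ?_⟩
        · rw [freach_succ]
          apply mem_iUnion₂.2
          refine ⟨y, ?_, ?_⟩
          · have h0 : (Fin.castSucc 0 : Fin (k+2)) = 0 := by simp
            show y ∈ G x (v (Fin.castSucc 0))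
            rw [h0]; exact hy
          · have hfun : (fun i : Fin k => v i.succ.castSucc)
                = (fun i : Fin k => v i.castSucc.succ) :=
              funext fun i => congrArg v (Fin.succ_castSucc i).symm
            show u ∈ FReach G k y fun i => v i.succ.castSucc
            rw [hfun]; exact hu
        · show z ∈ G u (v (Fin.last (k+1)))
          have : v (Fin.last k).succ = v (Fin.last (k+1)) := congrArg v (Fin.succ_last k)
          rw [← this]; exact hzu
      · intro hz
        obtain ⟨u, hu, hzu⟩ := mem_iUnion₂.1 hz
        rw [freach_succ] at hu
        obtain ⟨y, hy, hyu⟩ := mem_iUnion₂.1 hu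
        rw [freach_succ]
        apply mem_iUnion₂.2
        refine ⟨y, ?_, ?_⟩
        · have h0 : (Fin.castSucc 0 : Fin (k+2)) = 0 := by simp
          rw [← h0]; exact hy
        · rw [freach_back G k y (fun i => v i.succ)]
          apply mem_iUnion₂.2
          refine ⟨u, ?_, ?_⟩
          · have hfun : (fun i : Fin k => v i.succ.castSucc)
                = (fun i : Fin k => v i.castSucc.succ) :=
              funext fun i => congrArg v (Fin.succ_castSucc i).symm
            show u ∈ FReach G k y fun i => v i.castSucc.succ
            rw [← hfun]; exact hyu
          · show z ∈ G u (v (Fin.last k).succ)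
            have : v (Fin.last k).succ = v (Fin.last (k+1)) := congrArg v (Fin.succ_last k)
            rw [this]; exact hzu

variable {n m : ℕ} {X : Set (Fin n → ℝ)} {V : Set (Fin m → ℝ)}
  {G : (Fin n → ℝ) → (Fin m → ℝ) → Set (Fin n → ℝ)}

lemma freach_subset (hmap : ∀ x ∈ X, ∀ v ∈ V, G x v ⊆ X) :
    ∀ (k : ℕ) (x : Fin n → ℝ), x ∈ X → ∀ (v : Fin k → (Fin m → ℝ)), (∀ i, v i ∈ V) →
      FReach G k x v ⊆ X
  | 0, x, hx, v, hv => by simpa [freach_zero] using hx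
  | (k+1), x, hx, v, hv => by
      rw [freach_succ]
      refine Set.iUnion₂_subset fun y hy => ?_
      exact freach_subset hmap k y (hmap x hx (v 0) (hv 0) hy) _ (fun i => hv i.succ)

lemma freach_nonempty (hG : Standing X V G) (hmap : ∀ x ∈ X, ∀ v ∈ V, G x v ⊆ X) :
    ∀ (k : ℕ) (x : Fin n → ℝ), x ∈ X → ∀ (v : Fin k → (Fin m → ℝ)), (∀ i, v i ∈ V) →
      (FReach G k x v).Nonempty
  | 0, x, hx, v, hv => ⟨x, rfl⟩
  | (k+1), x, hx, v, hv => by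
      obtain ⟨y, hy⟩ := hG.nonemptyVals x hx (v 0) (hv 0)
      obtain ⟨z, hz⟩ := freach_nonempty hG hmap k y (hmap x hx (v 0) (hv 0) hy)
        (fun i => v i.succ) (fun i => hv i.succ)
      exact ⟨z, by rw [freach_succ]; exact Set.mem_biUnion hy hz⟩

/-- `lam` applied to an indicator is the indicator of reachability. -/
lemma lam_eq_indicator (hG : Standing X V G) (hmap : ∀ x ∈ X, ∀ v ∈ V, G x v ⊆ X)
    (T : Set (Fin n → ℝ)) :
    ∀ (k : ℕ) (x : Fin n → ℝ), x ∈ X → ∀ (v : Fin k → (Fin m → ℝ)), (∀ i, v i ∈ V) →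
      lam G (T.indicator fun _ => (1 : ℝ)) k x v
        = if (FReach G k x v ∩ T).Nonempty then 1 else 0
  | 0, x, hx, v, hv => by
      classical
      simp [lam, freach_zero, Set.indicator_apply, Set.singleton_inter_nonempty]
  | (k+1), x, hx, v, hv => by
      classical
      have himg : (fun y => lam G (T.indicator fun _ => (1 : ℝ)) k y (fun i => v i.succ)) ''
          G x (v 0)
          = (fun y => if (FReach G k y (fun i => v i.succ) ∩ T).Nonempty
              then (1:ℝ) else 0) '' G x (v 0) := by
        apply Set.image_congr
        intro y hy
        exact lam_eq_indicator hG hmap T k y (hmap x hx (v 0) (hv 0) hy) _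
          (fun i => hv i.succ)
      have hne : (G x (v 0)).Nonempty := hG.nonemptyVals x hx (v 0) (hv 0)
      have hiff : (FReach G (k+1) x v ∩ T).Nonempty
          ↔ ∃ y ∈ G x (v 0), (FReach G k y (fun i => v i.succ) ∩ T).Nonempty := by
        rw [freach_succ]
        constructor
        · rintro ⟨z, hz, hzT⟩
          simp only [mem_iUnion, exists_prop] at hz
          obtain ⟨y, hy, hzy⟩ := hz
          exact ⟨y, hy, z, hzy, hzT⟩
        · rintro ⟨y, hy, z, hzy, hzT⟩
          exact ⟨z, by simp only [mem_iUnion, exists_prop]; exact ⟨y, hy, hzy⟩, hzT⟩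
      show sSup _ = _
      rw [himg]
      by_cases hcase : ∃ y ∈ G x (v 0), (FReach G k y (fun i => v i.succ) ∩ T).Nonempty
      · rw [if_pos (hiff.mpr hcase)]
        obtain ⟨y, hy, hyT⟩ := hcase
        apply IsGreatest.csSup_eq
        constructor
        · exact ⟨y, hy, by simp [hyT]⟩
        · rintro t ⟨z, hz, rfl⟩
          by_cases h : (FReach G k z (fun i => v i.succ) ∩ T).Nonempty <;> simp [h]
      · rw [if_neg (fun h => hcase (hiff.mp h))]
        push_neg at hcase
        have : (fun y => if (FReach G k y (fun i => v i.succ) ∩ T).Nonempty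
            then (1:ℝ) else 0) '' G x (v 0) = {0} := by
          apply Set.eq_singleton_iff_nonempty_unique_mem.mpr
          refine ⟨hne.image _, ?_⟩
          rintro t ⟨z, hz, rfl⟩
          simp [hcase z hz]
        rw [this, csSup_singleton]

/-- Key cluster lemma: limits of selections from `G` along points approaching a
compact subset of `X` cluster in the graph. -/
lemma cluster (hG : Standing X V G) (hmap : ∀ x ∈ X, ∀ v ∈ V, G x v ⊆ X)
    {K : Set (Fin n → ℝ)} (hK : IsCompact K) (hKX : K ⊆ X) (hKne : K.Nonempty)
    {w : Fin m → ℝ} (hw : w ∈ V)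
    {y' ζ : ℕ → (Fin n → ℝ)} (hy'X : ∀ j, y' j ∈ X) (hζ : ∀ j, ζ j ∈ G (y' j) w)
    (happ : Tendsto (fun j => infDist (y' j) K) atTop (𝓝 0)) :
    ∃ a ∈ K, ∃ b ∈ G a w, ∃ φ : ℕ → ℕ, StrictMono φ ∧ Tendsto (ζ ∘ φ) atTop (𝓝 b) := by
  -- nearest points in K
  have hsel : ∀ j, ∃ yj ∈ K, infDist (y' j) K = dist (y' j) yj :=
    fun j => hK.exists_infDist_eq_dist hKne (y' j)
  choose yK hyK hdK using hsel
  obtain ⟨a, haK, φ₁, hφ₁, hlim1⟩ := hK.tendsto_subseq hyK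
  have hy'lim : Tendsto (y' ∘ φ₁) atTop (𝓝 a) := by
    rw [tendsto_iff_dist_tendsto_zero]
    have h1 : ∀ j, dist ((y' ∘ φ₁) j) a
        ≤ infDist (y' (φ₁ j)) K + dist (yK (φ₁ j)) a := by
      intro j
      calc dist (y' (φ₁ j)) a ≤ dist (y' (φ₁ j)) (yK (φ₁ j)) + dist (yK (φ₁ j)) a :=
            dist_triangle _ _ _
        _ = _ := by rw [hdK]
    refine squeeze_zero (fun j => dist_nonneg) h1 ?_
    have h2 : Tendsto (fun j => infDist (y' (φ₁ j)) K) atTop (𝓝 0) :=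
      happ.comp hφ₁.tendsto_atTop
    have h3 : Tendsto (fun j => dist (yK (φ₁ j)) a) atTop (𝓝 0) := by
      have := tendsto_iff_dist_tendsto_zero.1 hlim1
      simpa [Function.comp] using this
    simpa using h2.add h3
  -- local boundedness gives a bounded tail of ζ ∘ φ₁
  obtain ⟨U, hU, β, hβpos, hbd⟩ := hG.locBdd (a, w) (Set.mk_mem_prod (hKX haK) hw)
  rw [mem_nhds_prod_iff] at hU
  obtain ⟨A, hA, B, hB, hAB⟩ := hU
  have hev : ∀ᶠ j in atTop, (y' ∘ φ₁) j ∈ A := hy'lim hA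
  obtain ⟨J, hJ⟩ := eventually_atTop.1 hev
  have hζbd : ∀ j, ζ (φ₁ (j + J)) ∈ closedBall 0 β := by
    intro j
    have hy'A : y' (φ₁ (j + J)) ∈ A := hJ (j + J) (Nat.le_add_left J j)
    have hmem : ((y' (φ₁ (j + J))), w) ∈ U ∩ (X ×ˢ V) :=
      ⟨hAB (Set.mk_mem_prod hy'A (mem_of_mem_nhds hB)),
        Set.mk_mem_prod (hy'X _) hw⟩
    have := hbd _ hmem (ζ (φ₁ (j + J))) (hζ _)
    simpa [dist_zero_right] using this
  obtain ⟨b, _, φ₂, hφ₂, hblim⟩ :=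
    (isCompact_closedBall (0 : Fin n → ℝ) β).tendsto_subseq hζbd
  set φ : ℕ → ℕ := fun j => φ₁ (φ₂ j + J) with hφdef
  have hφmono : StrictMono φ := by
    intro i j hij
    exact hφ₁ (Nat.add_lt_add_right (hφ₂ hij) J)
  have hζφ : Tendsto (ζ ∘ φ) atTop (𝓝 b) := hblim
  have hy'φ : Tendsto (y' ∘ φ) atTop (𝓝 a) := by
    have : (y' ∘ φ) = (y' ∘ φ₁) ∘ (fun j => φ₂ j + J) := rfl
    rw [this]
    exact hy'lim.comp ((tendsto_add_atTop_nat J).comp hφ₂.tendsto_atTop)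
  -- b belongs to G a w
  have hGa_ne : (G a w).Nonempty := hG.nonemptyVals a (hKX haK) w hw
  have hGa_cl : IsClosed (G a w) := hG.closedVals a (hKX haK) w hw
  have hb : b ∈ G a w := by
    rw [hGa_cl.mem_iff_infDist_zero hGa_ne]
    refine le_antisymm ?_ infDist_nonneg
    refine le_of_forall_pos_le_add fun δ hδ => ?_
    obtain ⟨U', hU', husc⟩ := hG.usc w hw a (hKX haK) δ hδ
    have hevU' : ∀ᶠ j in atTop, (y' ∘ φ) j ∈ U' := hy'φ hU'
    have hevle : ∀ᶠ j in atTop, infDist ((ζ ∘ φ) j) (G a w) ≤ δ := by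
      filter_upwards [hevU'] with j hj
      have hsub : G ((y' ∘ φ) j) w ⊆ G a w + ball 0 δ :=
        husc _ ⟨hj, hy'X _⟩
      have hmem : (ζ ∘ φ) j ∈ G a w + ball 0 δ := hsub (hζ _)
      rw [Set.mem_add] at hmem
      obtain ⟨g, hg, e, he, hge⟩ := hmem
      have hdist : dist ((ζ ∘ φ) j) g = ‖e‖ := by
        rw [dist_eq_norm, ← hge]
        simp
      have hlt : dist ((ζ ∘ φ) j) g < δ := by
        rw [hdist]
        exact mem_ball_zero_iff.mp he
      exact le_trans (infDist_le_dist_of_mem hg) hlt.le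
    have hcont : Tendsto (fun j => infDist ((ζ ∘ φ) j) (G a w)) atTop
        (𝓝 (infDist b (G a w))) :=
      ((continuous_infDist_pt (G a w)).tendsto b).comp hζφ
    have := le_of_tendsto hcont hevle
    linarith
  exact ⟨a, haK, b, hb, φ, hφmono, hζφ⟩

/-- The image of a compact subset of `X` under `G (·) w` is compact. -/
lemma union_isCompact (hG : Standing X V G) (hmap : ∀ x ∈ X, ∀ v ∈ V, G x v ⊆ X)
    {K : Set (Fin n → ℝ)} (hK : IsCompact K) (hKX : K ⊆ X)
    {w : Fin m → ℝ} (hw : w ∈ V) :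
    IsCompact (⋃ y ∈ K, G y w) := by
  rcases K.eq_empty_or_nonempty with hKe | hKne
  · simp [hKe]
  rw [isCompact_iff_isClosed_bounded]
  constructor
  · -- closedness via sequences
    apply IsSeqClosed.isClosed
    intro u z hu hz
    have hsel : ∀ j, ∃ y ∈ K, u j ∈ G y w := by
      intro j
      have := hu j
      simpa only [mem_iUnion, exists_prop] using this
    choose y hyK hyu using hsel
    have happ : Tendsto (fun j => infDist (y j) K) atTop (𝓝 0) := by
      have : (fun j => infDist (y j) K) = fun _ => 0 := by
        funext j; exact infDist_zero_of_mem (hyK j)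
      rw [this]; exact tendsto_const_nhds
    obtain ⟨a, haK, b, hb, φ, hφ, hblim⟩ :=
      cluster hG hmap hK hKX hKne hw (fun j => hKX (hyK j)) hyu happ
    have huφ : Tendsto (u ∘ φ) atTop (𝓝 z) := hz.comp hφ.tendsto_atTop
    have hzb : z = b := tendsto_nhds_unique huφ hblim
    subst hzb
    exact Set.mem_biUnion haK hb
  · -- boundedness via a finite subcover
    have hnbhd : ∀ y ∈ K, ∃ A ∈ 𝓝 y, ∃ β : ℝ, ∀ y' ∈ A ∩ X, G y' w ⊆ closedBall 0 β := by
      intro y hyK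
      obtain ⟨U, hU, β, hβpos, hbd⟩ := hG.locBdd (y, w) (Set.mk_mem_prod (hKX hyK) hw)
      rw [mem_nhds_prod_iff] at hU
      obtain ⟨A, hA, B, hB, hAB⟩ := hU
      refine ⟨A, hA, β, fun y' hy' ζ hζ => ?_⟩
      have hmem : (y', w) ∈ U ∩ (X ×ˢ V) :=
        ⟨hAB (Set.mk_mem_prod hy'.1 (mem_of_mem_nhds hB)), Set.mk_mem_prod hy'.2 hw⟩
      have := hbd _ hmem ζ hζ
      simpa [dist_zero_right] using this
    choose! A hA β hβ using hnbhd
    obtain ⟨t, ht⟩ := hK.elim_nhds_subcover' (fun y hy => A y) (fun y hy => hA y hy)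
    have hsub : (⋃ y ∈ K, G y w) ⊆ ⋃ i ∈ t, closedBall (0 : Fin n → ℝ) (β i) := by
      intro ζ hζ
      simp only [mem_iUnion, exists_prop] at hζ
      obtain ⟨y, hyK, hζy⟩ := hζ
      obtain ⟨i, hit, hyi⟩ := by
        have := ht hyK
        simpa only [mem_iUnion, exists_prop] using this
      exact Set.mem_biUnion hit (hβ i i.2 y ⟨hyi, hKX hyK⟩ hζy)
    exact ((Bornology.isBounded_biUnion_finset t).2
      (fun i _ => isBounded_closedBall)).subset hsub

lemma freach_isCompact (hG : Standing X V G) (hmap : ∀ x ∈ X, ∀ v ∈ V, G x v ⊆ X) :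
    ∀ (k : ℕ) (x : Fin n → ℝ), x ∈ X → ∀ (v : Fin k → (Fin m → ℝ)), (∀ i, v i ∈ V) →
      IsCompact (FReach G k x v)
  | 0, x, hx, v, hv => by simp [freach_zero]
  | (k+1), x, hx, v, hv => by
      rw [freach_back]
      exact union_isCompact hG hmap
        (freach_isCompact hG hmap k x hx _ (fun i => hv i.castSucc))
        (freach_subset hmap k x hx _ (fun i => hv i.castSucc)) (hv (Fin.last k))

/-- Rational approximation in `Fin n → ℝ`. -/
lemma rat_approx (y : Fin n → ℝ) {ε : ℝ} (hε : 0 < ε) :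
    ∃ p : Fin n → ℚ, dist y (fun i => (p i : ℝ)) < ε := by
  have : ∀ i : Fin n, ∃ q : ℚ, |y i - (q : ℝ)| < ε := fun i => exists_rat_near (y i) hε
  choose p hp using this
  refine ⟨p, ?_⟩
  rw [dist_pi_lt_iff hε]
  intro i
  rw [Real.dist_eq]
  exact hp i

lemma tendsto_inv_succ (c : ℝ) :
    Tendsto (fun M : ℕ => c / (M + 1)) atTop (𝓝 0) := by
  have := tendsto_natCast_atTop_atTop (R := ℝ)
  have h : Tendsto (fun M : ℕ => (M : ℝ) + 1) atTop atTop :=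
    tendsto_atTop_add_const_right _ 1 this
  simpa [div_eq_mul_inv] using h.inv_tendsto_atTop.const_mul c

/-- The main measurability induction: hitting closed balls is measurable. -/
lemma meas_hit (hG : Standing X V G) (hmap : ∀ x ∈ X, ∀ v ∈ V, G x v ⊆ X)
    (x : Fin n → ℝ) (hx : x ∈ X) :
    ∀ (k : ℕ) (z : Fin n → ℝ) (r : ℝ),
      MeasurableSet {v : {v : Fin k → (Fin m → ℝ) // ∀ i, v i ∈ V} |
        (FReach G k x v.1 ∩ closedBall z r).Nonempty}
  | 0, z, r => by
      by_cases h : x ∈ closedBall z r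
      · convert MeasurableSet.univ
        ext v
        simp [freach_zero, h]
      · convert MeasurableSet.empty
        ext v
        simp [freach_zero, h]
  | (k+1), z, r => by
      classical
      have key : {v : {v : Fin (k+1) → (Fin m → ℝ) // ∀ i, v i ∈ V} |
            (FReach G (k+1) x v.1 ∩ closedBall z r).Nonempty}
          = ⋂ (M : ℕ), ⋃ (p : Fin n → ℚ),
              ({v : {v : Fin (k+1) → (Fin m → ℝ) // ∀ i, v i ∈ V} |
                  (FReach G k x (fun i => v.1 i.castSucc)
                    ∩ closedBall (fun i => (p i : ℝ)) (1/(M+1))).Nonempty}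
               ∩ {v : {v : Fin (k+1) → (Fin m → ℝ) // ∀ i, v i ∈ V} |
                  ({q : (Fin n → ℝ) × (Fin n → ℝ) | q.1 ∈ X ∧ q.2 ∈ G q.1 (v.1 (Fin.last k))}
                    ∩ (ball (fun i => (p i : ℝ)) (2/(M+1))
                        ×ˢ ball z (r + 1/(M+1)))).Nonempty}) := by
        ext v
        simp only [mem_iInter, mem_iUnion, mem_setOf_eq, mem_inter_iff]
        constructor
        · rintro ⟨ζ, hζF, hζB⟩
          rw [freach_back] at hζF
          obtain ⟨y, hyF, hζG⟩ := mem_iUnion₂.1 hζF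
          intro M
          have hMpos : (0:ℝ) < 1/(M+1) := by positivity
          obtain ⟨q, hq⟩ := rat_approx y hMpos
          refine ⟨q, ⟨y, hyF, mem_closedBall.2 hq.le⟩,
            ⟨(y, ζ), ⟨?_, hζG⟩, Set.mem_prod.mpr ⟨?_, ?_⟩⟩⟩
          · exact freach_subset hmap k x hx _ (fun i => v.2 i.castSucc) hyF
          · refine mem_ball.2 (hq.trans_le ?_)
            gcongr
            norm_num
          · exact mem_ball.2 (lt_of_le_of_lt (mem_closedBall.1 hζB) (by linarith))
        · intro h
          have hch : ∀ M : ℕ, ∃ (q : Fin n → ℚ) (y y' ζ : Fin n → ℝ),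
              y ∈ FReach G k x (fun i => v.1 i.castSucc)
              ∧ dist y (fun i => (q i:ℝ)) ≤ 1/(M+1)
              ∧ y' ∈ X ∧ ζ ∈ G y' (v.1 (Fin.last k))
              ∧ dist y' (fun i => (q i:ℝ)) < 2/(M+1) ∧ dist ζ z < r + 1/(M+1) := by
            intro M
            obtain ⟨q, ⟨y, hyF, hyB⟩, ⟨w, ⟨hwX, hwG⟩, hw1, hw2⟩⟩ := h M
            exact ⟨q, y, w.1, w.2, hyF, mem_closedBall.1 hyB, hwX, hwG,
              mem_ball.1 hw1, mem_ball.1 hw2⟩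
          choose q y y' ζ hyF hyB hy'X hζG hy'B hζB using hch
          have hKcomp : IsCompact (FReach G k x (fun i => v.1 i.castSucc)) :=
            freach_isCompact hG hmap k x hx _ (fun i => v.2 i.castSucc)
          have hKX' : FReach G k x (fun i => v.1 i.castSucc) ⊆ X :=
            freach_subset hmap k x hx _ (fun i => v.2 i.castSucc)
          have hKne : (FReach G k x (fun i => v.1 i.castSucc)).Nonempty :=
            freach_nonempty hG hmap k x hx _ (fun i => v.2 i.castSucc)
          have happ : Tendsto
              (fun M => infDist (y' M) (FReach G k x (fun i => v.1 i.castSucc)))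
              atTop (𝓝 0) := by
            refine squeeze_zero (fun M => infDist_nonneg) (g := fun M : ℕ => 3/(M+1))
              (fun M => ?_) (tendsto_inv_succ 3)
            calc infDist (y' M) (FReach G k x (fun i => v.1 i.castSucc))
                ≤ dist (y' M) (y M) := infDist_le_dist_of_mem (hyF M)
              _ ≤ dist (y' M) (fun i => (q M i : ℝ)) + dist (y M) (fun i => (q M i:ℝ)) :=
                  dist_triangle_right _ _ _
              _ ≤ 2/(M+1) + 1/(M+1) := add_le_add (hy'B M).le (hyB M)
              _ = 3/(M+1) := by ring
          obtain ⟨a, haK, b, hbG, φ, hφ, hblim⟩ :=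
            cluster hG hmap hKcomp hKX' hKne (v.2 (Fin.last k)) hy'X hζG happ
          refine ⟨b, ?_, ?_⟩
          · rw [freach_back]
            exact mem_iUnion₂.2 ⟨a, haK, hbG⟩
          · rw [mem_closedBall]
            have h1 : Tendsto (fun j => dist ((ζ ∘ φ) j) z) atTop (𝓝 (dist b z)) :=
              hblim.dist tendsto_const_nhds
            have h2 : Tendsto (fun j : ℕ => r + 1/(j+1)) atTop (𝓝 r) := by
              simpa using tendsto_const_nhds.add (tendsto_inv_succ 1)
            refine le_of_tendsto_of_tendsto' h1 h2 fun j => ?_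
            have hmono : (1:ℝ)/(φ j+1) ≤ 1/(j+1) :=
              one_div_le_one_div_of_le (by positivity)
                (by exact_mod_cast Nat.succ_le_succ hφ.le_apply)
            calc dist ((ζ ∘ φ) j) z ≤ r + 1/(φ j + 1) := (hζB (φ j)).le
              _ ≤ r + 1/(j+1) := by linarith
      rw [key]
      refine MeasurableSet.iInter fun M => MeasurableSet.iUnion fun p =>
        MeasurableSet.inter ?_ ?_
      · have hinitfun : Measurable (fun v : {v : Fin (k+1) → (Fin m → ℝ) // ∀ i, v i ∈ V} =>
            (fun i => v.1 i.castSucc : Fin k → (Fin m → ℝ))) :=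
          measurable_pi_lambda _ fun i =>
            (measurable_pi_apply (Fin.castSucc i)).comp measurable_subtype_coe
        have hinit : Measurable (fun v : {v : Fin (k+1) → (Fin m → ℝ) // ∀ i, v i ∈ V} =>
            (⟨fun i => v.1 i.castSucc, fun i => v.2 i.castSucc⟩ :
              {u : Fin k → (Fin m → ℝ) // ∀ i, u i ∈ V})) :=
          hinitfun.subtype_mk
        exact hinit (meas_hit hG hmap x hx k (fun i => (p i:ℝ)) (1/(M+1)))
      · have hlast : Measurable (fun v : {v : Fin (k+1) → (Fin m → ℝ) // ∀ i, v i ∈ V} =>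
            v.1 (Fin.last k)) := (measurable_pi_apply _).comp measurable_subtype_coe
        exact hlast (hG.graphMeas _ (isOpen_ball.prod isOpen_ball))

end Aux

/-- Under the standing assumptions, for a closed set `S ⊆ 𝒳`, the functions
`λ_{k+1}^S` built from the indicator of `S` are measurable in `(v₀,…,v_k) ∈ 𝒱^{k+1}`
for each fixed `x ∈ 𝒳`. -/
theorem stmt2 {n m : ℕ} (X : Set (Fin n → ℝ)) (V : Set (Fin m → ℝ))
    (G : (Fin n → ℝ) → (Fin m → ℝ) → Set (Fin n → ℝ))
    (hG : Standing X V G)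
    (hmap : ∀ x ∈ X, ∀ v ∈ V, G x v ⊆ X)
    (S : Set (Fin n → ℝ)) (hS : IsClosed S) (hSX : S ⊆ X)
    (k : ℕ) (x : Fin n → ℝ) (hx : x ∈ X) :
    Measurable (fun v : {v : Fin (k+1) → (Fin m → ℝ) // ∀ i, v i ∈ V} =>
      lam G (S.indicator fun _ => (1 : ℝ)) (k+1) x v.val) := by
  classical
  have hfun : (fun v : {v : Fin (k+1) → (Fin m → ℝ) // ∀ i, v i ∈ V} =>
      lam G (S.indicator fun _ => (1 : ℝ)) (k+1) x v.val)
      = fun v => if (FReach G (k+1) x v.val ∩ S).Nonempty then (1:ℝ) else 0 :=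
    funext fun v => lam_eq_indicator hG hmap S (k+1) x hx v.val v.2
  rw [hfun]
  have hAS : MeasurableSet {v : {v : Fin (k+1) → (Fin m → ℝ) // ∀ i, v i ∈ V} |
      (FReach G (k+1) x v.val ∩ S).Nonempty} := by
    have key : {v : {v : Fin (k+1) → (Fin m → ℝ) // ∀ i, v i ∈ V} |
          (FReach G (k+1) x v.val ∩ S).Nonempty}
        = ⋂ (M : ℕ), ⋃ (p : Fin n → ℚ),
            ⋃ (_ : (S ∩ Metric.ball (fun i => (p i:ℝ)) (2/(M+1))).Nonempty),
            {v : {v : Fin (k+1) → (Fin m → ℝ) // ∀ i, v i ∈ V} |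
              (FReach G (k+1) x v.val
                ∩ Metric.closedBall (fun i => (p i:ℝ)) (1/(M+1))).Nonempty} := by
      ext v
      simp only [Set.mem_iInter, Set.mem_iUnion, Set.mem_setOf_eq]
      constructor
      · rintro ⟨ζ, hζF, hζS⟩
        intro M
        have hMpos : (0:ℝ) < 1/(M+1) := by positivity
        obtain ⟨p, hp⟩ := rat_approx ζ hMpos
        refine ⟨p, ⟨ζ, hζS, Metric.mem_ball.2 (hp.trans_le ?_)⟩,
          ζ, hζF, Metric.mem_closedBall.2 hp.le⟩
        gcongr
        norm_num
      · intro h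
        have hch : ∀ M : ℕ, ∃ (p : Fin n → ℚ) (s y : Fin n → ℝ),
            s ∈ S ∧ dist s (fun i => (p i:ℝ)) < 2/(M+1) ∧
            y ∈ FReach G (k+1) x v.val ∧ dist y (fun i => (p i:ℝ)) ≤ 1/(M+1) := by
          intro M
          obtain ⟨p, ⟨s, hsS, hsB⟩, y, hyF, hyB⟩ := h M
          exact ⟨p, s, y, hsS, Metric.mem_ball.1 hsB, hyF, Metric.mem_closedBall.1 hyB⟩
        choose p sq y hsS hsB hyF hyB using hch
        have hKcomp : IsCompact (FReach G (k+1) x v.val) :=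
          freach_isCompact hG hmap (k+1) x hx _ v.2
        obtain ⟨a, haF, φ, hφ, halim⟩ := hKcomp.tendsto_subseq hyF
        have hslim : Filter.Tendsto (sq ∘ φ) Filter.atTop (nhds a) := by
          rw [tendsto_iff_dist_tendsto_zero]
          refine squeeze_zero (fun j => dist_nonneg)
            (g := fun j : ℕ => 3/(j+1) + dist ((y ∘ φ) j) a) (fun j => ?_) ?_
          · have hmono : (1:ℝ)/(φ j+1) ≤ 1/(j+1) :=
              one_div_le_one_div_of_le (by positivity)
                (by exact_mod_cast Nat.succ_le_succ hφ.le_apply)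
            calc dist ((sq ∘ φ) j) a
                ≤ dist (sq (φ j)) (y (φ j)) + dist (y (φ j)) a := dist_triangle _ _ _
              _ ≤ (dist (sq (φ j)) (fun i => (p (φ j) i : ℝ))
                    + dist (y (φ j)) (fun i => (p (φ j) i : ℝ))) + dist (y (φ j)) a := by
                  have := dist_triangle_right (sq (φ j)) (y (φ j))
                    (fun i => (p (φ j) i : ℝ))
                  linarith
              _ ≤ (2/(φ j+1) + 1/(φ j+1)) + dist (y (φ j)) a :=
                  add_le_add (add_le_add (hsB (φ j)).le (hyB (φ j))) le_rfl
              _ ≤ 3/(j+1) + dist ((y ∘ φ) j) a := by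
                  have h3 : (2:ℝ)/(φ j+1) + 1/(φ j+1) ≤ 3/(j+1) := by
                    have e1 : (2:ℝ)/(φ j+1) + 1/(φ j+1) = 3 * (1/(φ j+1)) := by ring
                    have e2 : (3:ℝ)/(j+1) = 3 * (1/(j+1)) := by ring
                    rw [e1, e2]
                    linarith
                  have h4 : dist (y (φ j)) a = dist ((y ∘ φ) j) a := rfl
                  linarith [h3, h4]
          · have h0 : Filter.Tendsto (fun j : ℕ => dist ((y ∘ φ) j) a)
                Filter.atTop (nhds 0) := tendsto_iff_dist_tendsto_zero.1 halim
            simpa using (tendsto_inv_succ 3).add h0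
        have haS : a ∈ S :=
          hS.mem_of_tendsto hslim (Filter.Eventually.of_forall fun j => hsS (φ j))
        exact ⟨a, haF, haS⟩
    rw [key]
    exact MeasurableSet.iInter fun M => MeasurableSet.iUnion fun p =>
      MeasurableSet.iUnion fun _ => meas_hit hG hmap x hx (k+1) _ _
  exact Measurable.ite hAS measurable_const measurable_const
end

section
/- Under the standing assumptions on G, suppose in addition that G is a convex set-valued map (its graph {(x, v, y) : y ∈ G(x, v)} is convex) with 𝒳 and 𝒱 convex, and let B : 𝒳 → [0, ∞) be a concave upper semicontinuous function. Define λ_0^B(x) = B(x) and λ_{k+1}^B(x, v_0, …, v_k) = sup_{x_1 ∈ G(x, v_0)} λ_k^B(x_1, v_1, …, v_k). Then for every k ≥ 0 the function λ_k^B is concave jointly in its arguments (x, v_0, …, v_{k−1}) ∈ 𝒳 × 𝒱^k. -/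
open MeasureTheory Set Pointwise

/-- An upper semicontinuous function on a compact set is bounded above on it. -/
lemma usc_bddAbove_of_compact {E : Type*} [TopologicalSpace E] {f : E → ℝ} {K : Set E}
    (hK : IsCompact K) (hf : UpperSemicontinuousOn f K) :
    ∃ M : ℝ, ∀ x ∈ K, f x ≤ M := by
  classical
  have hU : ∀ x, ∃ U : Set E, U ∈ nhds x ∧ (x ∈ K → ∀ z ∈ U ∩ K, f z < f x + 1) := by
    intro x
    by_cases hx : x ∈ K
    · have h := hf x hx (f x + 1) (by linarith)
      rw [eventually_nhdsWithin_iff] at h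
      obtain ⟨U, hU, hUK⟩ := Filter.eventually_iff_exists_mem.mp h
      exact ⟨U, hU, fun _ z hz => hUK z hz.1 hz.2⟩
    · exact ⟨univ, Filter.univ_mem, fun h => absurd h hx⟩
  choose U hUnhds hUbound using hU
  obtain ⟨t, htK, hcover⟩ := hK.elim_nhds_subcover U (fun x _ => hUnhds x)
  refine ⟨∑ x ∈ t, (|f x| + 1), fun z hz => ?_⟩
  obtain ⟨x, hxt, hzU⟩ := by
    have := hcover hz
    simpa using this
  have h1 : f z < f x + 1 := hUbound x (htK x hxt) z ⟨hzU, hz⟩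
  have h2 : f x + 1 ≤ |f x| + 1 := by have := le_abs_self (f x); linarith
  calc f z ≤ |f x| + 1 := by linarith
    _ ≤ ∑ x ∈ t, (|f x| + 1) := Finset.single_le_sum (f := fun x => |f x| + 1)
        (fun y _ => by positivity) hxt

/-- Local boundedness plus compactness gives a uniform bound. -/
lemma unif_bound_of_compact {E F V' : Type*} [TopologicalSpace E] [TopologicalSpace V']
    [Norm F] {X : Set E} {Vs : Set V'} {G : E → V' → Set F}
    (hloc : LocallyBoundedOn (X ×ˢ Vs) (fun p => G p.1 p.2))
    {K : Set E} (hK : IsCompact K) (hKX : K ⊆ X) {v : V'} (hv : v ∈ Vs) :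
    ∃ β : ℝ, ∀ x ∈ K, ∀ ζ ∈ G x v, ‖ζ‖ ≤ β := by
  classical
  have hU : ∀ x : E, ∃ (U : Set E) (β : ℝ), U ∈ nhds x ∧
      (x ∈ K → ∀ y ∈ U ∩ X, ∀ ζ ∈ G y v, ‖ζ‖ ≤ β) := by
    intro x
    by_cases hx : x ∈ K
    · obtain ⟨W, hW, β, hβpos, hβ⟩ := hloc (x, v) ⟨hKX hx, hv⟩
      rw [mem_nhds_prod_iff] at hW
      obtain ⟨U, hUx, Vv, hVv, hsub⟩ := hW
      refine ⟨U, β, hUx, fun _ y hy ζ hζ => hβ (y, v) ⟨hsub ⟨hy.1, mem_of_mem_nhds hVv⟩,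
        hy.2, hv⟩ ζ hζ⟩
    · exact ⟨univ, 0, Filter.univ_mem, fun h => absurd h hx⟩
  choose U β hUnhds hβ using hU
  obtain ⟨t, htK, hcover⟩ := hK.elim_nhds_subcover U (fun x _ => hUnhds x)
  refine ⟨∑ x ∈ t, |β x|, fun z hz ζ hζ => ?_⟩
  obtain ⟨x, hxt, hzU⟩ := by have := hcover hz; simpa using this
  calc ‖ζ‖ ≤ β x := hβ x (htK x hxt) z ⟨hzU, hKX hz⟩ ζ hζ
    _ ≤ |β x| := le_abs_self _
    _ ≤ ∑ x ∈ t, |β x| := Finset.single_le_sum (f := fun x => |β x|)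
        (fun y _ => abs_nonneg _) hxt

/-- The union of the values of a usc closed-valued map over a compact set is closed. -/
lemma union_isClosed {E F : Type*} [TopologicalSpace E] [NormedAddCommGroup F]
    {X : Set E} {G : E → Set F} (husc : USCOn X G) (hcl : ∀ x ∈ X, IsClosed (G x))
    {K : Set E} (hK : IsCompact K) (hKX : K ⊆ X) : IsClosed (⋃ x ∈ K, G x) := by
  classical
  rcases K.eq_empty_or_nonempty with hKe | hKne
  · simp [hKe]
  rw [← isOpen_compl_iff, Metric.isOpen_iff]
  intro ζ hζ
  simp only [mem_compl_iff, mem_iUnion, not_exists] at hζ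
  have hdat : ∀ x : E, ∃ (U : Set E) (δ : ℝ), U ∈ nhds x ∧ 0 < δ ∧
      (x ∈ K → ∀ y ∈ U ∩ X, ∀ z ∈ G y, δ ≤ dist ζ z) := by
    intro x
    by_cases hx : x ∈ K
    · have hζx : ζ ∈ (G x)ᶜ := hζ x hx
      obtain ⟨ε, hεpos, hball⟩ := Metric.isOpen_iff.mp (hcl x (hKX hx)).isOpen_compl ζ hζx
      obtain ⟨U, hU, hUsub⟩ := husc x (hKX hx) (ε/2) (by linarith)
      refine ⟨U, ε/2, hU, by linarith, fun _ y hy z hz => ?_⟩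
      obtain ⟨g, hg, e, he, hge⟩ := hUsub y hy hz
      have hdg : ε ≤ dist ζ g := by
        by_contra h
        push_neg at h
        exact hball (by rwa [Metric.mem_ball, dist_comm]) hg
      have hne : ‖e‖ < ε/2 := by simpa using mem_ball_zero_iff.mp he
      have hde : dist g z < ε/2 := by
        rw [← hge, dist_eq_norm]
        have hgz : g - (g + e) = -e := by abel
        rw [hgz, norm_neg]
        exact hne
      have : dist ζ g ≤ dist ζ z + dist z g := dist_triangle ζ z g
      rw [dist_comm z g] at this
      linarith
    · exact ⟨univ, 1, Filter.univ_mem, one_pos, fun h => absurd h hx⟩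
  choose U δ hUnhds hδpos hgood using hdat
  obtain ⟨t, htK, hcover⟩ := hK.elim_nhds_subcover U (fun x _ => hUnhds x)
  have htne : t.Nonempty := by
    obtain ⟨x0, hx0⟩ := hKne
    have := hcover hx0
    simp only [mem_iUnion, exists_prop] at this
    exact ⟨this.choose, this.choose_spec.1⟩
  refine ⟨t.inf' htne δ, by simp [Finset.lt_inf'_iff]; exact fun x _ => hδpos x, ?_⟩
  intro z hz
  simp only [mem_compl_iff, mem_iUnion, not_exists]
  intro y hy hzG
  obtain ⟨x, hxt, hyU⟩ := by have := hcover hy; simpa using this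
  have h1 : δ x ≤ dist ζ z := hgood x (htK x hxt) y ⟨hyU, hKX hy⟩ z hzG
  have h2 : t.inf' htne δ ≤ δ x := Finset.inf'_le _ hxt
  have h3 : dist z ζ < t.inf' htne δ := Metric.mem_ball.mp hz
  rw [dist_comm] at h3
  linarith

/-- The values `λ_k^B` are nonnegative on the domain. -/
lemma lam_nonneg {n m : ℕ} {X : Set (Fin n → ℝ)} {V : Set (Fin m → ℝ)}
    {G : (Fin n → ℝ) → (Fin m → ℝ) → Set (Fin n → ℝ)}
    (hne : ∀ x ∈ X, ∀ v ∈ V, (G x v).Nonempty)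
    (hmap : ∀ x ∈ X, ∀ v ∈ V, G x v ⊆ X)
    {B : (Fin n → ℝ) → ℝ} (hBnn : ∀ x ∈ X, 0 ≤ B x) :
    ∀ k (x : Fin n → ℝ), x ∈ X → ∀ v : Fin k → (Fin m → ℝ), (∀ i, v i ∈ V) →
      0 ≤ lam G B k x v := by
  intro k
  induction k with
  | zero => intro x hx v _; simpa [lam] using hBnn x hx
  | succ k ih =>
    intro x hx v hv
    simp only [lam]
    apply Real.sSup_nonneg
    rintro _ ⟨y, hy, rfl⟩
    exact ih y (hmap x hx (v 0) (hv 0) hy) _ (fun i => hv i.succ)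

/-- `λ_k^B` is bounded above on compact subsets of `X` (tail fixed). -/
lemma lam_bddAbove {n m : ℕ} {X : Set (Fin n → ℝ)} {V : Set (Fin m → ℝ)}
    {G : (Fin n → ℝ) → (Fin m → ℝ) → Set (Fin n → ℝ)} (hG : Standing X V G)
    (hmap : ∀ x ∈ X, ∀ v ∈ V, G x v ⊆ X)
    {B : (Fin n → ℝ) → ℝ} (hBusc : UpperSemicontinuousOn B X) :
    ∀ k (K : Set (Fin n → ℝ)), IsCompact K → K ⊆ X →
      ∀ v : Fin k → (Fin m → ℝ), (∀ i, v i ∈ V) →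
      ∃ M : ℝ, ∀ y ∈ K, lam G B k y v ≤ M := by
  intro k
  induction k with
  | zero =>
    intro K hK hKX v _
    obtain ⟨M, hM⟩ := usc_bddAbove_of_compact hK (hBusc.mono hKX)
    exact ⟨M, fun y hy => by simpa [lam] using hM y hy⟩
  | succ k ih =>
    intro K hK hKX v hv
    set T : Set (Fin n → ℝ) := ⋃ y ∈ K, G y (v 0) with hT
    have hTX : T ⊆ X := by
      intro z hz
      simp only [hT, mem_iUnion, exists_prop] at hz
      obtain ⟨y, hy, hzy⟩ := hz
      exact hmap y (hKX hy) (v 0) (hv 0) hzy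
    have hTbdd : Bornology.IsBounded T := by
      obtain ⟨β, hβ⟩ := unif_bound_of_compact hG.locBdd hK hKX (hv 0)
      rw [isBounded_iff_forall_norm_le]
      refine ⟨β, fun z hz => ?_⟩
      simp only [hT, mem_iUnion, exists_prop] at hz
      obtain ⟨y, hy, hzy⟩ := hz
      exact hβ y hy z hzy
    have hTcl : IsClosed T :=
      union_isClosed (hG.usc (v 0) (hv 0))
        (fun x hx => hG.closedVals x hx (v 0) (hv 0)) hK hKX
    have hTcompact : IsCompact T := Metric.isCompact_of_isClosed_isBounded hTcl hTbdd
    obtain ⟨M, hM⟩ := ih T hTcompact hTX (fun i => v i.succ) (fun i => hv i.succ)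
    refine ⟨M, fun y hy => ?_⟩
    simp only [lam]
    apply csSup_le ((hG.nonemptyVals y (hKX hy) (v 0) (hv 0)).image _)
    rintro _ ⟨z, hz, rfl⟩
    exact hM z (mem_biUnion hy hz)

/-- Under the standing assumptions, if in addition `G` has a convex graph, `𝒳` and `𝒱`
are convex, and `B : 𝒳 → [0,∞)` is concave and upper semicontinuous, then each
`λ_k^B` is jointly concave in `(x, v₀,…,v_{k−1}) ∈ 𝒳 × 𝒱^k`. -/
theorem stmt8 {n m : ℕ} (X : Set (Fin n → ℝ)) (V : Set (Fin m → ℝ))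
    (G : (Fin n → ℝ) → (Fin m → ℝ) → Set (Fin n → ℝ))
    (hG : Standing X V G)
    (hXconv : Convex ℝ X) (hVconv : Convex ℝ V)
    (hgraph : Convex ℝ {p : ((Fin n → ℝ) × (Fin m → ℝ)) × (Fin n → ℝ) |
      p.1.1 ∈ X ∧ p.1.2 ∈ V ∧ p.2 ∈ G p.1.1 p.1.2})
    (hmap : ∀ x ∈ X, ∀ v ∈ V, G x v ⊆ X)
    (B : (Fin n → ℝ) → ℝ) (hBnn : ∀ x ∈ X, 0 ≤ B x)
    (hBconc : ConcaveOn ℝ X B) (hBusc : UpperSemicontinuousOn B X) :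
    ∀ k : ℕ, ConcaveOn ℝ (X ×ˢ (Set.univ.pi fun _ : Fin k => V))
      (fun p : (Fin n → ℝ) × (Fin k → (Fin m → ℝ)) => lam G B k p.1 p.2) := by
  intro k
  induction k with
  | zero =>
    refine ⟨hXconv.prod (convex_pi fun _ _ => hVconv), ?_⟩
    intro p hp q hq a b ha hb hab
    simpa [lam, smul_eq_mul] using hBconc.2 hp.1 hq.1 ha hb hab
  | succ k ih =>
    refine ⟨hXconv.prod (convex_pi fun _ _ => hVconv), ?_⟩
    intro p hp q hq a b ha hb hab
    have hx1 : p.1 ∈ X := hp.1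
    have hx2 : q.1 ∈ X := hq.1
    have hv1 : ∀ i, p.2 i ∈ V := fun i => hp.2 i (mem_univ i)
    have hv2 : ∀ i, q.2 i ∈ V := fun i => hq.2 i (mem_univ i)
    have hxθ : a • p.1 + b • q.1 ∈ X := hXconv hx1 hx2 ha hb hab
    have hvθ : ∀ i, a • p.2 i + b • q.2 i ∈ V := fun i => hVconv (hv1 i) (hv2 i) ha hb hab
    set S1 : Set ℝ := (fun y => lam G B k y (fun i => p.2 i.succ)) '' G p.1 (p.2 0) with hS1
    set S2 : Set ℝ := (fun y => lam G B k y (fun i => q.2 i.succ)) '' G q.1 (q.2 0) with hS2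
    set Sθ : Set ℝ := (fun y => lam G B k y (fun i => a • p.2 i.succ + b • q.2 i.succ)) ''
      G (a • p.1 + b • q.1) (a • p.2 0 + b • q.2 0) with hSθ
    -- the combination of points of the graphs lies in the graph at the combination
    have hcomb : ∀ y1 ∈ G p.1 (p.2 0), ∀ y2 ∈ G q.1 (q.2 0),
        a • y1 + b • y2 ∈ G (a • p.1 + b • q.1) (a • p.2 0 + b • q.2 0) := by
      intro y1 hy1 y2 hy2
      have h := hgraph (x := ((p.1, p.2 0), y1)) (y := ((q.1, q.2 0), y2))
        ⟨hx1, hv1 0, hy1⟩ ⟨hx2, hv2 0, hy2⟩ ha hb hab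
      exact h.2.2
    -- the inductive concavity estimate
    have hIH : ∀ y1 ∈ G p.1 (p.2 0), ∀ y2 ∈ G q.1 (q.2 0),
        a * lam G B k y1 (fun i => p.2 i.succ) + b * lam G B k y2 (fun i => q.2 i.succ) ≤
        lam G B k (a • y1 + b • y2) (fun i => a • p.2 i.succ + b • q.2 i.succ) := by
      intro y1 hy1 y2 hy2
      have h := ih.2 (x := (y1, fun i => p.2 i.succ))
        ⟨hmap p.1 hx1 (p.2 0) (hv1 0) hy1, fun i _ => hv1 i.succ⟩
        (y := (y2, fun i => q.2 i.succ))
        ⟨hmap q.1 hx2 (q.2 0) (hv2 0) hy2, fun i _ => hv2 i.succ⟩ ha hb hab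
      simpa [smul_eq_mul, Pi.smul_def, Pi.add_def] using h
    -- Sθ is bounded above
    have hKcompact : IsCompact (G (a • p.1 + b • q.1) (a • p.2 0 + b • q.2 0)) := by
      have hcl : IsClosed (G (a • p.1 + b • q.1) (a • p.2 0 + b • q.2 0)) :=
        hG.closedVals _ hxθ _ (hvθ 0)
      have hbd : Bornology.IsBounded (G (a • p.1 + b • q.1) (a • p.2 0 + b • q.2 0)) := by
        obtain ⟨U, hU, β, hβpos, hβ⟩ := hG.locBdd (a • p.1 + b • q.1, a • p.2 0 + b • q.2 0)
          ⟨hxθ, hvθ 0⟩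
        rw [isBounded_iff_forall_norm_le]
        exact ⟨β, fun z hz => hβ _ ⟨mem_of_mem_nhds hU, hxθ, hvθ 0⟩ z hz⟩
      exact Metric.isCompact_of_isClosed_isBounded hcl hbd
    obtain ⟨M, hM⟩ := lam_bddAbove hG hmap hBusc k _ hKcompact
      (hmap _ hxθ _ (hvθ 0)) (fun i => a • p.2 i.succ + b • q.2 i.succ) (fun i => hvθ i.succ)
    have hbdd : BddAbove Sθ := by
      refine ⟨M, ?_⟩
      rintro _ ⟨y, hy, rfl⟩
      exact hM y hy
    have hS1ne : S1.Nonempty := (hG.nonemptyVals p.1 hx1 (p.2 0) (hv1 0)).image _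
    have hS2ne : S2.Nonempty := (hG.nonemptyVals q.1 hx2 (q.2 0) (hv2 0)).image _
    -- the key pointwise inequality
    have key : ∀ r ∈ S1, ∀ s ∈ S2, a * r + b * s ≤ sSup Sθ := by
      rintro _ ⟨y1, hy1, rfl⟩ _ ⟨y2, hy2, rfl⟩
      have hmem : lam G B k (a • y1 + b • y2) (fun i => a • p.2 i.succ + b • q.2 i.succ) ∈ Sθ :=
        mem_image_of_mem _ (hcomb y1 hy1 y2 hy2)
      exact le_trans (hIH y1 hy1 y2 hy2) (le_csSup hbdd hmem)
    -- conclude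
    have main : a * sSup S1 + b * sSup S2 ≤ sSup Sθ := by
      rcases eq_or_lt_of_le ha with ha0 | hapos
      · -- a = 0
        have hb1 : b = 1 := by linarith
        obtain ⟨r, hr⟩ := hS1ne
        have : sSup S2 ≤ sSup Sθ := by
          apply csSup_le hS2ne
          intro s hs
          have := key r hr s hs
          rw [← ha0, hb1] at this
          linarith
        rw [← ha0, hb1]
        linarith
      rcases eq_or_lt_of_le hb with hb0 | hbpos
      · -- b = 0
        have ha1 : a = 1 := by linarith
        obtain ⟨s, hs⟩ := hS2ne
        have : sSup S1 ≤ sSup Sθ := by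
          apply csSup_le hS1ne
          intro r hr
          have := key r hr s hs
          rw [← hb0, ha1] at this
          linarith
        rw [← hb0, ha1]
        linarith
      -- a, b > 0
      have hS2le : ∀ r ∈ S1, sSup S2 ≤ (sSup Sθ - a * r) / b := by
        intro r hr
        apply csSup_le hS2ne
        intro s hs
        rw [le_div_iff₀ hbpos]
        have := key r hr s hs
        linarith [mul_comm s b]
      have hS1le : sSup S1 ≤ (sSup Sθ - b * sSup S2) / a := by
        apply csSup_le hS1ne
        intro r hr
        rw [le_div_iff₀ hapos]
        have h := (le_div_iff₀ hbpos).mp (hS2le r hr)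
        linarith [mul_comm r a, mul_comm (sSup S2) b]
      have h := (le_div_iff₀ hapos).mp hS1le
      linarith [mul_comm (sSup S1) a]
    -- translate to the stated goal
    show a • lam G B (k+1) p.1 p.2 + b • lam G B (k+1) q.1 q.2 ≤
      lam G B (k+1) (a • p + b • q).1 (a • p + b • q).2
    simp only [lam, smul_eq_mul]
    exact main
end

section
/- Under the standing assumptions on G, with G a convex set-valued map, 𝒳 and 𝒱 convex, let B : 𝒳 → [0, ∞) be a concave upper semicontinuous function, and suppose μ has a finite mean v̄ = E[v] ∈ 𝒱 and the function v ↦ sup_{x⁺ ∈ G(x, v)} B(x⁺) is μ-integrable for each x. If for each x ∈ 𝒳 \ X_u one has sup_{x⁺ ∈ G(x, v̄)} B(x⁺) ≤ B(x), then for each x ∈ 𝒳 \ X_u the supermartingale inequality E[ sup_{x⁺ ∈ G(x, v)} B(x⁺) ] ≤ B(x) holds, i.e. ∫ sup_{x⁺ ∈ G(x, v)} B(x⁺) dμ(v) ≤ B(x). -/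
open MeasureTheory Set Pointwise

section AuxJensen
open Module

/-- Any measurable set disjoint from a full-measure set is null. -/
lemma null_of_disjoint_full {E : Type*} [MeasurableSpace E] {μ : Measure E}
    [IsProbabilityMeasure μ] {S : Set E} (hμS : μ S = 1) {A : Set E}
    (hA : MeasurableSet A) (hAS : ∀ v ∈ S, v ∉ A) : μ A = 0 := by
  have hSA : S ⊆ Aᶜ := fun z hz => hAS z hz
  have h1 : (1 : ENNReal) ≤ μ Aᶜ := hμS ▸ measure_mono hSA
  have h2 : μ A + μ Aᶜ = 1 := by
    rw [measure_add_measure_compl hA, measure_univ]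
  have h3 : μ A + 1 ≤ 0 + 1 := by
    rw [zero_add]
    calc μ A + 1 ≤ μ A + μ Aᶜ := by exact add_le_add le_rfl h1
    _ = 1 := h2
  have := (ENNReal.add_le_add_iff_right (by simp)).mp h3
  exact le_antisymm this zero_le

/-- Barycenter of a probability measure giving full (outer) measure to a convex set
in a finite-dimensional space lies in the set (no closedness needed). -/
lemma bary_aux {E : Type*} [NormedAddCommGroup E] [NormedSpace ℝ E] [FiniteDimensional ℝ E]
    [MeasurableSpace E] [BorelSpace E] :
    ∀ (d : ℕ) (μ : Measure E) (_ : IsProbabilityMeasure μ) (S : Set E), Convex ℝ S → μ S = 1 →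
      Integrable (fun x => x) μ →
      finrank ℝ (Submodule.span ℝ ((fun v => v - ∫ x, x ∂μ) '' S)) ≤ d →
      (∫ x, x ∂μ) ∈ S := by
  intro d
  induction d with
  | zero =>
    intro μ hprob S hconv hμS hint hrank
    haveI := hprob
    have hSne : S.Nonempty := by
      rcases S.eq_empty_or_nonempty with h | h
      · exfalso; rw [h] at hμS; simp at hμS
      · exact h
    have hW : Submodule.span ℝ ((fun v => v - ∫ x, x ∂μ) '' S) = ⊥ :=
      Submodule.finrank_eq_zero.mp (Nat.le_zero.mp hrank)
    obtain ⟨v, hv⟩ := hSne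
    have hmem : v - ∫ x, x ∂μ ∈ (⊥ : Submodule ℝ E) :=
      hW ▸ Submodule.subset_span ⟨v, hv, rfl⟩
    have hveq : v = ∫ x, x ∂μ := by
      have := (Submodule.mem_bot ℝ).mp hmem
      rwa [sub_eq_zero] at this
    rwa [← hveq]
  | succ d ih =>
    intro μ hprob S hconv hμS hint hrank
    haveI := hprob
    by_cases hbS : (∫ x, x ∂μ) ∈ S
    · exact hbS
    set b := ∫ x, x ∂μ with hb
    have hb_cl : b ∈ closure S := by
      have hae : ∀ᵐ x ∂μ, x ∈ closure S := by
        rw [ae_iff]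
        exact null_of_disjoint_full hμS isClosed_closure.measurableSet.compl
          (fun v hv hc => hc (subset_closure hv))
      exact hconv.closure.integral_mem isClosed_closure hae hint
    have hSne : S.Nonempty := by
      rcases S.eq_empty_or_nonempty with h | h
      · exfalso; rw [h] at hμS; simp at hμS
      · exact h
    set C : Set E := (fun v => v - b) '' S with hC
    have hCconv : Convex ℝ C := by
      have hCeq : C = (fun z => -b + z) '' S := by
        ext w
        constructor <;> rintro ⟨v, hv, rfl⟩ <;> exact ⟨v, hv, by simp [sub_eq_neg_add]⟩
      rw [hCeq]; exact hconv.translate (-b)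
    have hCne : C.Nonempty := hSne.image _
    have h0C : (0 : E) ∈ closure C := by
      have hcont : Continuous (fun v : E => v - b) := continuous_id.sub continuous_const
      have : (fun v : E => v - b) b ∈ closure C :=
        (image_closure_subset_closure_image hcont) ⟨b, hb_cl, rfl⟩
      simpa using this
    have h0notC : (0 : E) ∉ C := by
      rintro ⟨v, hv, hv0⟩
      exact hbS (by rwa [show b = v by rw [sub_eq_zero] at hv0; exact hv0.symm])
    set W := Submodule.span ℝ C with hWDef
    have hA0 : (0 : E) ∈ affineSpan ℝ C := by
      have h1 : closure C ⊆ closure (affineSpan ℝ C : Set E) :=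
        closure_mono (subset_affineSpan ℝ C)
      have h2 : IsClosed (affineSpan ℝ C : Set E) :=
        AffineSubspace.closed_of_finiteDimensional _
      have := h1 h0C
      rwa [h2.closure_eq] at this
    have hvs : vectorSpan ℝ C = W := by
      apply le_antisymm
      · rw [vectorSpan_def]
        refine Submodule.span_le.mpr ?_
        rintro x hx
        rw [Set.mem_vsub] at hx
        obtain ⟨u, hu, v, hv, rfl⟩ := hx
        exact Submodule.sub_mem _ (Submodule.subset_span hu) (Submodule.subset_span hv)
      · refine Submodule.span_le.mpr fun c hc => ?_
        have := AffineSubspace.vsub_mem_direction (subset_affineSpan ℝ C hc) hA0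
        rw [direction_affineSpan] at this
        simpa using this
    obtain ⟨Wc, hWc⟩ := Submodule.exists_isCompl W
    set D : Set E := C + (Wc : Set E) with hD
    have hCD : C ⊆ D := fun c hc => Set.mem_add.mpr ⟨c, hc, 0, Wc.zero_mem, add_zero c⟩
    have hDconv : Convex ℝ D := hCconv.add Wc.convex
    have hDne : D.Nonempty := by
      obtain ⟨c, hc⟩ := hCne; exact ⟨c, hCD hc⟩
    have h0D : (0 : E) ∉ D := by
      rintro h
      obtain ⟨c, hc, w, hw, hcw⟩ := Set.mem_add.mp h
      have hcW : c ∈ W := Submodule.subset_span hc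
      have hwW : w ∈ W := by
        have : w = -c := by linear_combination (norm := abel) hcw
        rw [this]; exact Submodule.neg_mem _ hcW
      have : w = 0 := Submodule.disjoint_def.mp hWc.disjoint.symm w hw hwW
      rw [this, add_zero] at hcw
      rw [hcw] at hc
      exact h0notC hc
    -- D is invariant under translations from Wc
    have hDinvD : ∀ u ∈ Wc, ∀ z ∈ D, z + u ∈ D := by
      intro u hu z hz
      obtain ⟨c, hc, w, hw, rfl⟩ := Set.mem_add.mp hz
      exact Set.mem_add.mpr ⟨c, hc, w + u, Wc.add_mem hw hu, by abel⟩
    have hDinv : ∀ u ∈ Wc, ∀ a ∈ interior D, a + u ∈ interior D := by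
      intro u hu a ha
      have himg : (Homeomorph.addRight u) '' D = D := by
        ext z
        constructor
        · rintro ⟨y, hy, rfl⟩
          exact hDinvD u hu y hy
        · intro hz
          refine ⟨z + -u, hDinvD (-u) (Wc.neg_mem hu) z hz, ?_⟩
          simp [Homeomorph.addRight]
      have : (Homeomorph.addRight u) a ∈ (Homeomorph.addRight u) '' interior D :=
        Set.mem_image_of_mem _ ha
      rw [Homeomorph.image_interior, himg] at this
      simpa [Homeomorph.addRight] using this
    -- affineSpan of D is everything
    have hWle : W ≤ vectorSpan ℝ D := hvs ▸ vectorSpan_mono ℝ hCD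
    have hWcle : Wc ≤ vectorSpan ℝ D := by
      intro w hw
      obtain ⟨c₀, hc₀⟩ := hCne
      have h1 : c₀ + w ∈ D := Set.mem_add.mpr ⟨c₀, hc₀, w, hw, rfl⟩
      have h2 : c₀ + 0 ∈ D := Set.mem_add.mpr ⟨c₀, hc₀, 0, Wc.zero_mem, rfl⟩
      have := vsub_mem_vectorSpan ℝ h1 h2
      simpa using this
    have hvsD : vectorSpan ℝ D = ⊤ := by
      refine le_antisymm le_top ?_
      rw [← hWc.sup_eq_top]
      exact sup_le hWle hWcle
    have hDspan : affineSpan ℝ D = ⊤ := by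
      obtain ⟨p₀, hp₀⟩ := hDne
      rw [eq_top_iff]
      intro p _
      have h1 : p - p₀ ∈ (affineSpan ℝ D).direction := by
        rw [direction_affineSpan, hvsD]; exact Submodule.mem_top
      have := AffineSubspace.vadd_mem_of_mem_direction h1 (subset_affineSpan ℝ D hp₀)
      simpa [sub_add_cancel] using this
    have hintD : (interior D).Nonempty :=
      (hDconv.interior_nonempty_iff_affineSpan_eq_top).mpr hDspan
    -- separating functional
    obtain ⟨l, hl⟩ := geometric_hahn_banach_open_point hDconv.interior isOpen_interior
      (fun h => h0D (interior_subset h))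
    have hlneg : ∀ a ∈ interior D, l a < 0 := by
      intro a ha
      have := hl a ha
      simpa using this
    -- l vanishes on Wc
    have hlWc : ∀ w ∈ Wc, l w = 0 := by
      intro w hw
      by_contra hne
      obtain ⟨a, ha⟩ := hintD
      set t : ℝ := (1 - l a) / l w with ht
      have hmem : a + t • w ∈ interior D := hDinv (t • w) (Wc.smul_mem t hw) a ha
      have hlt : l (a + t • w) < 0 := hlneg _ hmem
      rw [map_add, _root_.map_smul, smul_eq_mul, ht, div_mul_cancel₀ _ hne] at hlt
      linarith
    -- l is nonpositive on C
    have hlC : ∀ c ∈ C, l c ≤ 0 := by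
      intro c hc
      obtain ⟨a, ha⟩ := hintD
      have hla : l a < 0 := hlneg a ha
      by_contra hpos
      push_neg at hpos
      set θ : ℝ := l c / (l c - l a) with hθ
      have hden : 0 < l c - l a := by linarith
      have hθ0 : 0 < θ := div_pos hpos hden
      have hθ1 : θ ≤ 1 := by
        rw [div_le_one hden]; linarith
      have hmem : (1 - θ) • c + θ • a ∈ interior D :=
        hDconv.combo_closure_interior_mem_interior (subset_closure (hCD hc)) ha
          (by linarith) hθ0 (by ring)
      have hlt : l ((1 - θ) • c + θ • a) < 0 := hlneg _ hmem
      rw [map_add, _root_.map_smul, _root_.map_smul, smul_eq_mul, smul_eq_mul] at hlt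
      have : (1 - θ) * l c + θ * l a = 0 := by
        rw [hθ]; field_simp; ring
      linarith
    -- l is nontrivial on W
    obtain ⟨a, ha⟩ := hintD
    obtain ⟨c, hc, w, hw, hcw⟩ := Set.mem_add.mp (interior_subset ha)
    have hlc : l c < 0 := by
      have h1 : l a < 0 := hlneg a ha
      have h2 : l a = l c := by rw [← hcw, map_add, hlWc w hw, add_zero]
      linarith
    have hcW : c ∈ W := Submodule.subset_span hc
    -- the kernel slice has smaller rank
    have hlt : W ⊓ LinearMap.ker (l : E →ₗ[ℝ] ℝ) < W := by
      refine lt_of_le_of_ne inf_le_left fun h => ?_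
      have hck : c ∈ W ⊓ LinearMap.ker (l : E →ₗ[ℝ] ℝ) := by rw [h]; exact hcW
      have : l c = 0 := hck.2
      linarith
    -- a.e. l v = l b
    have hae_le : ∀ᵐ v ∂μ, l v ≤ l b := by
      rw [ae_iff]
      refine null_of_disjoint_full hμS ?_ ?_
      · have : MeasurableSet {v : E | l b < l v} :=
          measurableSet_lt measurable_const (l.continuous.measurable)
        simpa [not_le] using this
      · intro v hv hmem
        simp only [mem_setOf_eq, not_le] at hmem
        have : l (v - b) ≤ 0 := hlC _ ⟨v, hv, rfl⟩
        rw [map_sub] at this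
        linarith
    have hint_l : ∫ v, l v ∂μ = l b := l.integral_comp_comm hint
    have hae_eq : ∀ᵐ v ∂μ, l v = l b := by
      have hInt2 : Integrable (fun v => l b - l v) μ :=
        (integrable_const _).sub (l.integrable_comp hint)
      have h0 : ∫ v, (l b - l v) ∂μ = 0 := by
        rw [integral_sub (integrable_const _) (l.integrable_comp hint), hint_l,
          integral_const]
        simp
      have hnn : 0 ≤ᵐ[μ] fun v => l b - l v := by
        filter_upwards [hae_le] with v hv
        simpa using sub_nonneg.mpr hv
      have := (integral_eq_zero_iff_of_nonneg_ae hnn hInt2).mp h0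
      filter_upwards [this] with v hv
      have : l b - l v = 0 := hv
      linarith
    -- restrict to the slice
    set S' : Set E := S ∩ {v | l v = l b} with hS'
    have hμS' : μ S' = 1 := by
      have hN : μ {v | ¬ l v = l b} = 0 := by rw [← ae_iff]; exact hae_eq
      refine le_antisymm prob_le_one ?_
      have hsub : S ⊆ S' ∪ {v | ¬ l v = l b} := by
        intro v hv
        by_cases h : l v = l b
        · exact Or.inl ⟨hv, h⟩
        · exact Or.inr h
      calc (1 : ENNReal) = μ S := hμS.symm
      _ ≤ μ (S' ∪ {v | ¬ l v = l b}) := measure_mono hsub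
      _ ≤ μ S' + μ {v | ¬ l v = l b} := measure_union_le _ _
      _ = μ S' := by rw [hN, add_zero]
    have hS'conv : Convex ℝ S' :=
      hconv.inter (convex_hyperplane (l : E →ₗ[ℝ] ℝ).isLinear (l b))
    have hrank' : finrank ℝ (Submodule.span ℝ ((fun v => v - ∫ x, x ∂μ) '' S')) ≤ d := by
      have hle : Submodule.span ℝ ((fun v => v - ∫ x, x ∂μ) '' S') ≤
          W ⊓ LinearMap.ker (l : E →ₗ[ℝ] ℝ) := by
        refine Submodule.span_le.mpr ?_
        rintro _ ⟨v, hv, rfl⟩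
        refine ⟨Submodule.subset_span ⟨v, hv.1, rfl⟩, ?_⟩
        have : l (v - b) = 0 := by rw [map_sub, hv.2, sub_self]
        simpa [LinearMap.mem_ker] using this
      have h1 : finrank ℝ (Submodule.span ℝ ((fun v => v - ∫ x, x ∂μ) '' S')) ≤
          finrank ℝ (W ⊓ LinearMap.ker (l : E →ₗ[ℝ] ℝ) : Submodule ℝ E) :=
        Submodule.finrank_mono hle
      have h2 : finrank ℝ (W ⊓ LinearMap.ker (l : E →ₗ[ℝ] ℝ) : Submodule ℝ E) <
          finrank ℝ W := Submodule.finrank_lt_finrank_of_lt hlt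
      omega
    exact (ih μ hprob S' hS'conv hμS' hint hrank').1

/-- Jensen's inequality for a concave function on a convex set w.r.t. a probability
measure giving the set full measure, without any regularity assumptions. -/
lemma jensen_concave {m : ℕ} {V : Set (Fin m → ℝ)} {f : (Fin m → ℝ) → ℝ}
    (hf : ConcaveOn ℝ V f) (μ : Measure (Fin m → ℝ)) [IsProbabilityMeasure μ]
    (hμV : μ V = 1) (hIf : Integrable f μ) (hIid : Integrable (fun v => v) μ) :
    ∫ v, f v ∂μ ≤ f (∫ v, v ∂μ) := by
  classical
  set T : (Fin m → ℝ) → (Fin m → ℝ) × ℝ := fun v => (v, f v) with hT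
  have hTmeas : AEMeasurable T μ := (measurable_id.aemeasurable).prodMk hIf.aemeasurable
  set ν := μ.map T with hν
  haveI : IsProbabilityMeasure ν := Measure.isProbabilityMeasure_map hTmeas
  set S : Set ((Fin m → ℝ) × ℝ) := {p | p.1 ∈ V ∧ p.2 ≤ f p.1} with hS
  have hSconv : Convex ℝ S := hf.convex_hypograph
  have hνS : ν S = 1 := by
    refine le_antisymm prob_le_one ?_
    rw [hν, measure_eq_iInf]
    refine le_iInf fun t => le_iInf fun hSt => le_iInf fun ht => ?_
    rw [Measure.map_apply_of_aemeasurable hTmeas ht]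
    refine hμV ▸ measure_mono fun v hv => ?_
    exact hSt ⟨hv, le_refl _⟩
  have hTint : Integrable T μ := hIid.prodMk hIf
  have hνint : Integrable (fun p : (Fin m → ℝ) × ℝ => p) ν := by
    rw [hν]
    exact (integrable_map_measure aestronglyMeasurable_id hTmeas).mpr hTint
  have hbar : ∫ p, p ∂ν = (∫ v, v ∂μ, ∫ v, f v ∂μ) := by
    have e1 : ∫ p, p ∂ν = ∫ v, T v ∂μ := by
      rw [hν]
      exact integral_map hTmeas aestronglyMeasurable_id
    rw [e1]
    have h1 := (ContinuousLinearMap.fst ℝ (Fin m → ℝ) ℝ).integral_comp_comm hTint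
    have h2 := (ContinuousLinearMap.snd ℝ (Fin m → ℝ) ℝ).integral_comp_comm hTint
    simp only [ContinuousLinearMap.coe_fst', ContinuousLinearMap.coe_snd'] at h1 h2
    refine Prod.ext ?_ ?_
    · exact h1.symm
    · exact h2.symm
  have hmem : (∫ p, p ∂ν) ∈ S := by
    refine bary_aux (finrank ℝ ((Fin m → ℝ) × ℝ)) ν inferInstance S hSconv hνS hνint ?_
    exact Submodule.finrank_le _
  rw [hbar] at hmem
  exact hmem.2

end AuxJensen

/-- Under the standing assumptions with `G` a convex set-valued map, `𝒳, 𝒱` convex and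
`B` concave and upper semicontinuous: if `μ` has mean `v̄ ∈ 𝒱`, the marginal function
is integrable, and `sup_{x⁺ ∈ G(x,v̄)} B(x⁺) ≤ B(x)` for every `x ∈ 𝒳 \ X_u`, then the
supermartingale inequality `E[sup_{x⁺ ∈ G(x,v)} B(x⁺)] ≤ B(x)` holds on `𝒳 \ X_u`. -/
theorem stmt10 {n m : ℕ} (X : Set (Fin n → ℝ)) (V : Set (Fin m → ℝ))
    (G : (Fin n → ℝ) → (Fin m → ℝ) → Set (Fin n → ℝ))
    (hG : Standing X V G)
    (hXconv : Convex ℝ X) (hVconv : Convex ℝ V)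
    (hgraph : Convex ℝ {p : ((Fin n → ℝ) × (Fin m → ℝ)) × (Fin n → ℝ) |
      p.1.1 ∈ X ∧ p.1.2 ∈ V ∧ p.2 ∈ G p.1.1 p.1.2})
    (hmap : ∀ x ∈ X, ∀ v ∈ V, G x v ⊆ X)
    (Xu : Set (Fin n → ℝ)) (hXu : Xu ⊆ X)
    (B : (Fin n → ℝ) → ℝ) (hBnn : ∀ x ∈ X, 0 ≤ B x)
    (hBconc : ConcaveOn ℝ X B) (hBusc : UpperSemicontinuousOn B X)
    (μ : Measure (Fin m → ℝ)) [IsProbabilityMeasure μ] (hμV : μ V = 1)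
    (vbar : Fin m → ℝ) (hvbarV : vbar ∈ V)
    (hIntId : Integrable (fun v : Fin m → ℝ => v) μ)
    (hmean : ∫ v, v ∂μ = vbar)
    (hIntSup : ∀ x ∈ X, Integrable (fun v => sSup (B '' G x v)) μ)
    (hsup : ∀ x ∈ X \ Xu, sSup (B '' G x vbar) ≤ B x) :
    ∀ x ∈ X \ Xu, ∫ v, sSup (B '' G x v) ∂μ ≤ B x := by
  intro x hx
  have hxX : x ∈ X := hx.1
  have hne : ∀ v ∈ V, (B '' G x v).Nonempty := fun v hv =>
    (hG.nonemptyVals x hxX v hv).image B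
  -- images are bounded above
  have hBdd : ∀ v ∈ V, BddAbove (B '' G x v) := by
    intro v hv
    obtain ⟨U, hU, β, hβ, hbound⟩ := hG.locBdd (x, v) (Set.mem_prod.mpr ⟨hxX, hv⟩)
    have hGb : ∀ ζ ∈ G x v, ‖ζ‖ ≤ β :=
      hbound (x, v) ⟨mem_of_mem_nhds hU, Set.mem_prod.mpr ⟨hxX, hv⟩⟩
    have hK : IsCompact (G x v) :=
      Metric.isCompact_of_isClosed_isBounded (hG.closedVals x hxX v hv)
        (isBounded_iff_forall_norm_le.mpr ⟨β, hGb⟩)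
    by_contra hnb
    have hseq : ∀ k : ℕ, ∃ z ∈ G x v, (k : ℝ) < B z := by
      intro k
      obtain ⟨r, hr, hkr⟩ := not_bddAbove_iff.mp hnb (k : ℝ)
      obtain ⟨z, hz, rfl⟩ := hr
      exact ⟨z, hz, hkr⟩
    choose y hy1 hy2 using hseq
    obtain ⟨z₀, hz₀K, φ, hφ, hlim⟩ := hK.tendsto_subseq hy1
    have hz₀X : z₀ ∈ X := hmap x hxX v hv hz₀K
    have husc := hBusc z₀ hz₀X (B z₀ + 1) (lt_add_one _)
    have htend : Filter.Tendsto (fun k => y (φ k)) Filter.atTop (nhdsWithin z₀ X) := by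
      rw [tendsto_nhdsWithin_iff]
      exact ⟨hlim, Filter.Eventually.of_forall fun k => hmap x hxX v hv (hy1 (φ k))⟩
    obtain ⟨k, hk1, hk2⟩ := ((htend.eventually husc).and (Filter.eventually_atTop.mpr
      ⟨⌈B z₀ + 1⌉₊, fun b hb => hb⟩)).exists
    have c1 : B z₀ + 1 ≤ (⌈B z₀ + 1⌉₊ : ℝ) := Nat.le_ceil _
    have c2 : ((⌈B z₀ + 1⌉₊ : ℕ) : ℝ) ≤ (k : ℝ) := Nat.cast_le.mpr hk2
    have c3 : (k : ℝ) ≤ (φ k : ℝ) := Nat.cast_le.mpr hφ.le_apply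
    have c4 : ((φ k : ℕ) : ℝ) < B (y (φ k)) := hy2 (φ k)
    linarith
  -- the marginal function is concave
  have hconc : ConcaveOn ℝ V (fun v => sSup (B '' G x v)) := by
    refine ⟨hVconv, ?_⟩
    intro v₁ hv₁ v₂ hv₂ a b ha hb hab
    show a • sSup (B '' G x v₁) + b • sSup (B '' G x v₂) ≤
      sSup (B '' G x (a • v₁ + b • v₂))
    rcases eq_or_lt_of_le ha with rfl | ha'
    · have hb1 : b = 1 := by linarith
      subst hb1
      simp
    rcases eq_or_lt_of_le hb with rfl | hb'
    · have ha1 : a = 1 := by linarith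
      subst ha1
      simp
    have hvV : a • v₁ + b • v₂ ∈ V := hVconv hv₁ hv₂ ha hb hab
    have hxx : a • x + b • x = x := Convex.combo_self hab x
    have hkey : ∀ y₁ ∈ G x v₁, ∀ y₂ ∈ G x v₂,
        a • y₁ + b • y₂ ∈ G x (a • v₁ + b • v₂) := by
      intro y₁ hy₁ y₂ hy₂
      have h1 : (((x, v₁), y₁) : ((Fin n → ℝ) × (Fin m → ℝ)) × (Fin n → ℝ)) ∈
          {p : ((Fin n → ℝ) × (Fin m → ℝ)) × (Fin n → ℝ) |
            p.1.1 ∈ X ∧ p.1.2 ∈ V ∧ p.2 ∈ G p.1.1 p.1.2} := ⟨hxX, hv₁, hy₁⟩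
      have h2 : (((x, v₂), y₂) : ((Fin n → ℝ) × (Fin m → ℝ)) × (Fin n → ℝ)) ∈
          {p : ((Fin n → ℝ) × (Fin m → ℝ)) × (Fin n → ℝ) |
            p.1.1 ∈ X ∧ p.1.2 ∈ V ∧ p.2 ∈ G p.1.1 p.1.2} := ⟨hxX, hv₂, hy₂⟩
      have h := hgraph h1 h2 ha hb hab
      simp only [Prod.smul_mk, Prod.mk_add_mk, Set.mem_setOf_eq] at h
      rw [hxx] at h
      exact h.2.2
    set s₁ := sSup (B '' G x v₁) with hs₁
    set s₂ := sSup (B '' G x v₂) with hs₂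
    set t := sSup (B '' G x (a • v₁ + b • v₂)) with htdef
    have hub : ∀ y₁ ∈ G x v₁, ∀ y₂ ∈ G x v₂, a * B y₁ + b * B y₂ ≤ t := by
      intro y₁ hy₁ y₂ hy₂
      have h1 : a • B y₁ + b • B y₂ ≤ B (a • y₁ + b • y₂) :=
        hBconc.2 (hmap x hxX v₁ hv₁ hy₁) (hmap x hxX v₂ hv₂ hy₂) ha hb hab
      have h2 : B (a • y₁ + b • y₂) ≤ t :=
        le_csSup (hBdd _ hvV) ⟨_, hkey y₁ hy₁ y₂ hy₂, rfl⟩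
      simpa [smul_eq_mul] using h1.trans h2
    have hstep1 : ∀ y₂ ∈ G x v₂, a * s₁ + b * B y₂ ≤ t := by
      intro y₂ hy₂
      have hs : s₁ ≤ (t - b * B y₂) / a := by
        refine csSup_le (hne v₁ hv₁) ?_
        rintro r ⟨y₁, hy₁, rfl⟩
        rw [le_div_iff₀ ha']
        linarith [hub y₁ hy₁ y₂ hy₂]
      have hmul := mul_le_mul_of_nonneg_left hs ha'.le
      rw [mul_comm a ((t - b * B y₂) / a), div_mul_cancel₀ _ (ne_of_gt ha')] at hmul
      linarith
    have hs2 : s₂ ≤ (t - a * s₁) / b := by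
      refine csSup_le (hne v₂ hv₂) ?_
      rintro r ⟨y₂, hy₂, rfl⟩
      rw [le_div_iff₀ hb']
      linarith [hstep1 y₂ hy₂]
    have hfin := mul_le_mul_of_nonneg_left hs2 hb'.le
    rw [mul_comm b ((t - a * s₁) / b), div_mul_cancel₀ _ (ne_of_gt hb')] at hfin
    simp only [smul_eq_mul]
    linarith
  have hJ := jensen_concave hconc μ hμV (hIntSup x hxX) hIntId
  rw [hmean] at hJ
  exact hJ.trans (hsup x hx)
end
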